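/- Let a, b, z be complex numbers with |z| < 1 and let m be a natural number. Then the entire-in-c extension of ₂F₁/Γ evaluated at c = −m satisfies: ∑_{k=0}^∞ (a)_k (b)_k z^k / (Γ(−m+k) · k!) = ((a)_{m+1} (b)_{m+1} z^{m+1} / (m+1)!) · ₂F₁(a+m+1, b+m+1; m+2; z). (Note that 1/Γ(−m+k) = 0 for 0 ≤ k ≤ m, so the left-hand sum effectively starts at k = m+1.) -/

import Mathlib

open Complex

/-- The Gaussian hypergeometric function `₂F₁(a, b; c; z)`, defined by its power series. -/
noncomputable def hyp2F1 (a b c z : ℂ) : ℂ :=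
  ∑' m : ℕ, ((ascPochhammer ℂ m).eval a * (ascPochhammer ℂ m).eval b /
    ((ascPochhammer ℂ m).eval c * (m.factorial : ℂ))) * z ^ m

theorem hyp2F1_neg_int_c_limit (a b z : ℂ) (hz : ‖z‖ < 1) (m : ℕ) :
    (∑' k : ℕ, (ascPochhammer ℂ k).eval a * (ascPochhammer ℂ k).eval b * z ^ k
        * (Complex.Gamma (-(m : ℂ) + k))⁻¹ / (k.factorial : ℂ))
      = (ascPochhammer ℂ (m + 1)).eval a * (ascPochhammer ℂ (m + 1)).eval b * z ^ (m + 1)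
          / ((m + 1).factorial : ℂ)
        * hyp2F1 (a + m + 1) (b + m + 1) ((m : ℂ) + 2) z := by
  have hshift : (∑' k : ℕ, (ascPochhammer ℂ k).eval a * (ascPochhammer ℂ k).eval b * z ^ k
        * (Complex.Gamma (-(m : ℂ) + k))⁻¹ / (k.factorial : ℂ))
      = ∑' n : ℕ, (ascPochhammer ℂ (m + 1 + n)).eval a * (ascPochhammer ℂ (m + 1 + n)).eval b
          * z ^ (m + 1 + n) * (Complex.Gamma (-(m : ℂ) + ((m + 1 + n : ℕ) : ℂ)))⁻¹
          / ((m + 1 + n).factorial : ℂ) := by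
    refine (Function.Injective.tsum_eq (g := fun n : ℕ => m + 1 + n)
      (fun x y hxy => Nat.add_left_cancel hxy) ?_).symm
    intro k hk
    rcases le_or_gt (m + 1) k with h | h
    · exact ⟨k - (m + 1), show m + 1 + (k - (m + 1)) = k by omega⟩
    · refine absurd ?_ hk
      have h0 : -(m : ℂ) + k = -(((m - k : ℕ) : ℂ)) := by
        push_cast [Nat.cast_sub (by omega : k ≤ m)]; ring
      show Polynomial.eval a (ascPochhammer ℂ k) * Polynomial.eval b (ascPochhammer ℂ k)
          * z ^ k * (Complex.Gamma (-(m : ℂ) + k))⁻¹ / (k.factorial : ℂ) = 0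
      rw [h0, Complex.Gamma_neg_nat_eq_zero, inv_zero, mul_zero, zero_div]
  rw [hshift, hyp2F1, ← tsum_mul_left]
  refine tsum_congr fun n => ?_
  have hGamma : Complex.Gamma (-(m : ℂ) + ((m + 1 + n : ℕ) : ℂ)) = (n.factorial : ℂ) := by
    have h1 : -(m : ℂ) + ((m + 1 + n : ℕ) : ℂ) = (n : ℂ) + 1 := by push_cast; ring
    rw [h1, Complex.Gamma_nat_eq_factorial]
  have hsplit : ∀ x : ℂ, (ascPochhammer ℂ (m + 1 + n)).eval x
      = (ascPochhammer ℂ (m + 1)).eval x * (ascPochhammer ℂ n).eval (x + (m : ℂ) + 1) := by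
    intro x
    have h := congrArg (Polynomial.eval x) (ascPochhammer_mul ℂ (m + 1) n)
    rw [Polynomial.eval_mul, Polynomial.eval_comp, Polynomial.eval_add, Polynomial.eval_X,
      Polynomial.eval_natCast] at h
    have h2 : x + ((m + 1 : ℕ) : ℂ) = x + (m : ℂ) + 1 := by push_cast; ring
    rw [h2] at h
    exact h.symm
  have hpoch : (ascPochhammer ℂ n).eval ((m : ℂ) + 2)
      = ((m + 1 + n).factorial : ℂ) / (((m + 1).factorial : ℂ)) := by
    have h := factorial_mul_ascPochhammer ℂ (m + 1) n
    have h2 : ((m + 1 : ℕ) : ℂ) + 1 = (m : ℂ) + 2 := by push_cast; ring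
    rw [h2] at h
    rw [eq_div_iff (Nat.cast_ne_zero.mpr (Nat.factorial_ne_zero _)), mul_comm]
    exact h
  rw [hGamma, hsplit a, hsplit b, hpoch]
  have hfn : ((n.factorial : ℂ)) ≠ 0 := Nat.cast_ne_zero.mpr (Nat.factorial_ne_zero _)
  have hfm : (((m + 1).factorial : ℂ)) ≠ 0 := Nat.cast_ne_zero.mpr (Nat.factorial_ne_zero _)
  have hfmn : (((m + 1 + n).factorial : ℂ)) ≠ 0 := Nat.cast_ne_zero.mpr (Nat.factorial_ne_zero _)
  rw [pow_add]
  field_simp
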